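/- For positive semidefinite operators ρ, σ, ω on a finite-dimensional Hilbert space with ω ≥ ρ (Loewner order), the fidelity-type quantity ‖√ω √σ‖₁ is at least ‖√ρ √σ‖₁, where ‖·‖₁ is the trace norm. -/

import Mathlib

open scoped ComplexOrder Kronecker
open Matrix Classical

noncomputable def msqrt {n : Type*} [Fintype n] [DecidableEq n] (A : Matrix n n ℂ) :
    Matrix n n ℂ :=
  if h : A.PosSemidef then
    h.1.eigenvectorUnitary.1 * diagonal ((↑) ∘ (√·) ∘ h.1.eigenvalues) *
      (star h.1.eigenvectorUnitary : Matrix n n ℂ)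
  else 0

noncomputable def traceNorm {n : Type*} [Fintype n] [DecidableEq n] (A : Matrix n n ℂ) : ℝ :=
  (msqrt (Aᴴ * A)).trace.re

noncomputable def fid {n : Type*} [Fintype n] [DecidableEq n] (ρ σ : Matrix n n ℂ) : ℝ :=
  traceNorm (msqrt ρ * msqrt σ) + Real.sqrt ((1 - ρ.trace.re) * (1 - σ.trace.re))

noncomputable def pdist {n : Type*} [Fintype n] [DecidableEq n] (ρ σ : Matrix n n ℂ) : ℝ :=
  Real.sqrt (1 - (fid ρ σ) ^ 2)

/-- Loewner order: `A ≤ B` iff `B - A` is positive semidefinite. -/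
def loewnerLE {n : Type*} [Fintype n] (A B : Matrix n n ℂ) : Prop := (B - A).PosSemidef

/-- Max-relative entropy `D_max(ρ‖σ) = min {λ : ρ ≤ 2^λ σ}`. -/
noncomputable def Dmax {n : Type*} [Fintype n] (ρ σ : Matrix n n ℂ) : ℝ :=
  sInf {l : ℝ | loewnerLE ρ (((2 : ℝ) ^ l) • σ)}

def Subnormalized {n : Type*} [Fintype n] (ρ : Matrix n n ℂ) : Prop :=
  ρ.PosSemidef ∧ 0 < ρ.trace.re ∧ ρ.trace.re ≤ 1

def IsDensity {n : Type*} [Fintype n] (ρ : Matrix n n ℂ) : Prop :=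
  ρ.PosSemidef ∧ ρ.trace = 1

namespace Matrix.PosSemidef
variable {n : Type*} [Fintype n] [DecidableEq n]

noncomputable def sqrt {A : Matrix n n ℂ} (hA : A.PosSemidef) : Matrix n n ℂ :=
  hA.1.eigenvectorUnitary.1 * diagonal ((↑) ∘ (√·) ∘ hA.1.eigenvalues) *
    (star hA.1.eigenvectorUnitary : Matrix n n ℂ)

open scoped MatrixOrder in
lemma sqrt_eq_cfcSqrt {A : Matrix n n ℂ} (hA : A.PosSemidef) : hA.sqrt = CFC.sqrt A := by
  rw [CFC.sqrt_eq_cfc, cfc_nnreal_eq_real _ A hA.nonneg, hA.1.cfc_eq]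
  simp only [IsHermitian.cfc, sqrt]
  congr 3
  funext i
  simp [Real.coe_toNNReal _ (hA.eigenvalues_nonneg i), max_eq_left (hA.eigenvalues_nonneg i)]

open scoped MatrixOrder in
lemma posSemidef_sqrt {A : Matrix n n ℂ} (hA : A.PosSemidef) : hA.sqrt.PosSemidef := by
  rw [sqrt_eq_cfcSqrt]; exact (CFC.sqrt_nonneg A).posSemidef

open scoped MatrixOrder in
lemma sqrt_mul_self {A : Matrix n n ℂ} (hA : A.PosSemidef) : hA.sqrt * hA.sqrt = A := by
  rw [sqrt_eq_cfcSqrt]; exact CFC.sqrt_mul_sqrt_self A hA.nonneg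

open scoped MatrixOrder in
lemma eq_sqrt_of_sq_eq {A : Matrix n n ℂ} (hA : A.PosSemidef) {B : Matrix n n ℂ}
    (hB : B.PosSemidef) (hAB : A ^ 2 = B) : A = hB.sqrt := by
  rw [sqrt_eq_cfcSqrt, ← hAB, CFC.sqrt_sq A hA.nonneg]

end Matrix.PosSemidef

section Aux
variable {n : Type*} [Fintype n] [DecidableEq n]

lemma psd_diag_nonneg {A : Matrix n n ℂ} (hA : A.PosSemidef) (i : n) : 0 ≤ A i i := by
  simpa [dotProduct, mulVec, Pi.single_apply] using hA.dotProduct_mulVec_nonneg (Pi.single i 1)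

lemma psd_trace_re_nonneg {A : Matrix n n ℂ} (hA : A.PosSemidef) : 0 ≤ A.trace.re := by
  rw [Matrix.trace, Complex.re_sum]
  exact Finset.sum_nonneg fun i _ => (Complex.le_def.mp (psd_diag_nonneg hA i)).1

lemma psd_trace_mul_re_nonneg {A B : Matrix n n ℂ} (hA : A.PosSemidef) (hB : B.PosSemidef) :
    0 ≤ (A * B).trace.re := by
  obtain ⟨C, rfl⟩ : ∃ C : Matrix n n ℂ, B = Cᴴ * C := by
    open scoped MatrixOrder in exact CStarAlgebra.nonneg_iff_eq_star_mul_self.mp hB.nonneg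
  have h1 : (A * (Cᴴ * C)).trace = (C * A * Cᴴ).trace := by
    rw [← Matrix.mul_assoc, Matrix.trace_mul_comm, Matrix.mul_assoc]
  rw [h1]
  exact psd_trace_re_nonneg (hA.mul_mul_conjTranspose_same C)

lemma var_ineq {X W : Matrix n n ℂ} (hX : X.PosSemidef) (hW : W.IsHermitian)
    (hWd : IsUnit W.det) :
    2 * (hX.sqrt).trace.re ≤ (X * (W * W)).trace.re + (W⁻¹ * W⁻¹).trace.re := by
  set S := hX.sqrt with hSdef
  have hSh : S.IsHermitian := hX.posSemidef_sqrt.1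
  set N := S * W - W⁻¹ with hNdef
  have hNH : Nᴴ = W * S - W⁻¹ := by
    rw [hNdef, conjTranspose_sub, conjTranspose_mul, hSh.eq, hW.eq, conjTranspose_nonsing_inv,
      hW.eq]
  have key : (Nᴴ * N).trace = (X * (W * W)).trace + (W⁻¹ * W⁻¹).trace - 2 * S.trace := by
    have hinv : W⁻¹ * W = 1 := nonsing_inv_mul W hWd
    have hinv' : W * W⁻¹ = 1 := mul_nonsing_inv W hWd
    have hSS : S * S = X := hX.sqrt_mul_self
    have expand : Nᴴ * N = W * (S * S) * W - W * S * W⁻¹ - W⁻¹ * (S * W) + W⁻¹ * W⁻¹ := by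
      rw [hNH, hNdef]; noncomm_ring
    rw [expand, hSS]
    have t1 : (W * X * W).trace = (X * (W * W)).trace := by
      rw [Matrix.mul_assoc, Matrix.trace_mul_comm, Matrix.mul_assoc]
    have t2 : (W * S * W⁻¹).trace = S.trace := by
      rw [Matrix.trace_mul_comm, ← Matrix.mul_assoc, hinv, Matrix.one_mul]
    have t3 : (W⁻¹ * (S * W)).trace = S.trace := by
      rw [Matrix.trace_mul_comm, Matrix.mul_assoc, hinv', Matrix.mul_one]
    rw [Matrix.trace_add, Matrix.trace_sub, Matrix.trace_sub, t1, t2, t3]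
    ring
  have h0 : 0 ≤ (Nᴴ * N).trace.re := psd_trace_re_nonneg (posSemidef_conjTranspose_mul_self N)
  rw [key] at h0
  simp only [Complex.sub_re, Complex.add_re, Complex.mul_re] at h0
  norm_num at h0 ⊢
  linarith

lemma smul_one_psd {ε : ℝ} (hε : 0 ≤ ε) : ((ε:ℂ) • (1 : Matrix n n ℂ)).PosSemidef := by
  have : ((ε:ℂ) • (1 : Matrix n n ℂ)) = diagonal (fun _ => (ε:ℂ)) := by
    ext i j
    by_cases h : i = j <;> simp [h, Matrix.one_apply, Matrix.diagonal_apply]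
  rw [this]
  exact PosSemidef.diagonal fun i => by simpa using Complex.zero_le_real.mpr hε

lemma trace_sqrt_shift {Y : Matrix n n ℂ} (hY : Y.PosSemidef) (ε : ℝ) (hε : 0 ≤ ε)
    (hYε : (Y + (ε:ℂ) • 1).PosSemidef) :
    (hYε.sqrt).trace.re = ∑ i, Real.sqrt (hY.1.eigenvalues i + ε) := by
  set U : Matrix n n ℂ := (hY.1.eigenvectorUnitary : Matrix n n ℂ)
  have hU1 : star U * U = 1 := (Matrix.mem_unitaryGroup_iff').mp hY.1.eigenvectorUnitary.2
  have hU2 : U * star U = 1 := (Matrix.mem_unitaryGroup_iff).mp hY.1.eigenvectorUnitary.2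
  set d : n → ℂ := fun i => (Real.sqrt (hY.1.eigenvalues i + ε) : ℂ)
  set B : Matrix n n ℂ := U * diagonal d * star U
  have hBpsd : B.PosSemidef := by
    have hd : (diagonal d).PosSemidef := PosSemidef.diagonal fun i => by
      simpa [d] using Complex.zero_le_real.mpr (Real.sqrt_nonneg _)
    have := hd.mul_mul_conjTranspose_same U
    simpa [star_eq_conjTranspose, B] using this
  have hB2 : B ^ 2 = Y + (ε:ℂ) • 1 := by
    have : B ^ 2 = U * (diagonal d * diagonal d) * star U := by
      rw [pow_two]
      simp only [B, Matrix.mul_assoc]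
      rw [← Matrix.mul_assoc (star U) U, hU1, Matrix.one_mul]
    rw [this, diagonal_mul_diagonal]
    have hdd : (fun i => d i * d i) = fun i => ((hY.1.eigenvalues i : ℂ) + ε) := by
      funext i
      simp only [d, ← Complex.ofReal_mul,
        Real.mul_self_sqrt (add_nonneg (hY.eigenvalues_nonneg i) hε)]
      push_cast; ring
    rw [hdd]
    have hsplit : (diagonal (fun i => (hY.1.eigenvalues i : ℂ) + ε) : Matrix n n ℂ)
        = diagonal (RCLike.ofReal ∘ hY.1.eigenvalues) + (ε:ℂ) • 1 := by
      ext i j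
      by_cases h : i = j <;> simp [h, Matrix.diagonal_apply, Matrix.one_apply]
    rw [hsplit, Matrix.mul_add, Matrix.add_mul]
    have h1 : U * diagonal (RCLike.ofReal ∘ hY.1.eigenvalues) * star U = Y :=
      hY.1.spectral_theorem.symm
    have h2 : U * ((ε:ℂ) • 1) * star U = (ε:ℂ) • 1 := by
      rw [Matrix.mul_smul, Matrix.mul_one, Matrix.smul_mul, hU2]
    rw [h1, h2]
  have hBsqrt : hYε.sqrt = B := (hBpsd.eq_sqrt_of_sq_eq hYε hB2).symm
  rw [hBsqrt]
  have htr : B.trace = ∑ i, d i := by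
    show (U * diagonal d * star U).trace = _
    rw [Matrix.trace_mul_comm, ← Matrix.mul_assoc, hU1, Matrix.one_mul, Matrix.trace_diagonal]
  rw [htr, Complex.re_sum]
  refine Finset.sum_congr rfl fun i _ => ?_
  simp [d]

lemma sqrt_congr {A B : Matrix n n ℂ} (h : A = B) (hA : A.PosSemidef) (hB : B.PosSemidef) :
    hA.sqrt = hB.sqrt := by subst h; rfl

lemma trace_sqrt_eq {Y : Matrix n n ℂ} (hY : Y.PosSemidef) :
    (hY.sqrt).trace.re = ∑ i, Real.sqrt (hY.1.eigenvalues i) := by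
  have h0 : Y + ((0:ℝ):ℂ) • (1 : Matrix n n ℂ) = Y := by simp
  have hYε : (Y + ((0:ℝ):ℂ) • (1 : Matrix n n ℂ)).PosSemidef := h0.symm ▸ hY
  have := trace_sqrt_shift hY 0 le_rfl hYε
  rw [sqrt_congr h0 hYε hY] at this
  simpa using this

lemma trace_sqrt_mono {X Y : Matrix n n ℂ} (hX : X.PosSemidef) (hY : Y.PosSemidef)
    (h : (Y - X).PosSemidef) :
    (hX.sqrt).trace.re ≤ (hY.sqrt).trace.re := by
  have key : ∀ ε : ℝ, 0 < ε →
      (hX.sqrt).trace.re ≤ ∑ i, Real.sqrt (hY.1.eigenvalues i + ε) := by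
    intro ε hε
    set Yε := Y + (ε:ℂ) • (1 : Matrix n n ℂ) with hYεdef
    have hYε : Yε.PosSemidef := hY.add (smul_one_psd hε.le)
    have hYεPD : Yε.PosDef := by
      refine PosDef.of_dotProduct_mulVec_pos hYε.1 fun x hx => ?_
      have h1 : star x ⬝ᵥ Yε *ᵥ x = star x ⬝ᵥ Y *ᵥ x + (ε:ℂ) * (star x ⬝ᵥ x) := by
        rw [hYεdef, add_mulVec, dotProduct_add, smul_mulVec, one_mulVec, dotProduct_smul]
        simp [smul_eq_mul]
      rw [h1]
      have h2 : 0 < (ε:ℂ) * (star x ⬝ᵥ x) :=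
        mul_pos (by exact_mod_cast Complex.zero_lt_real.mpr hε)
          (dotProduct_star_self_pos_iff.mpr hx)
      exact lt_of_lt_of_le h2 (le_add_of_nonneg_left (hY.dotProduct_mulVec_nonneg x))
    set Sε := hYε.sqrt with hSεdef
    have hSεpsd : Sε.PosSemidef := hYε.posSemidef_sqrt
    have hSε2 : Sε * Sε = Yε := hYε.sqrt_mul_self
    have hSεdet : IsUnit Sε.det := by
      have : Sε.det * Sε.det = Yε.det := by rw [← det_mul, hSε2]
      have hne : Yε.det ≠ 0 := hYεPD.det_pos.ne'
      refine isUnit_iff_ne_zero.mpr fun hc => hne ?_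
      rw [← this, hc, mul_zero]
    set T := Sε⁻¹ with hTdef
    have hT : T.PosSemidef := hSεpsd.inv
    set W := hT.sqrt with hWdef
    have hWh : W.IsHermitian := hT.posSemidef_sqrt.1
    have hWW : W * W = T := hT.sqrt_mul_self
    have hWdet : IsUnit W.det := by
      have h1 : W.det * W.det = T.det := by rw [← det_mul, hWW]
      have h2 : T.det ≠ 0 := by
        rw [hTdef, det_nonsing_inv]
        simpa using hSεdet.ne_zero
      refine isUnit_iff_ne_zero.mpr fun hc => h2 ?_
      rw [← h1, hc, mul_zero]
    have hWinv : W⁻¹ * W⁻¹ = Sε := by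
      rw [← Matrix.mul_inv_rev, hWW, hTdef, Matrix.nonsing_inv_nonsing_inv _ hSεdet]
    have hvar := var_ineq hX hWh hWdet
    rw [hWW, hWinv] at hvar
    have hmono : (X * T).trace.re ≤ (Yε * T).trace.re := by
      have hdiff : (Yε - X).PosSemidef := by
        have : Yε - X = (Y - X) + (ε:ℂ) • (1 : Matrix n n ℂ) := by
          rw [hYεdef]; abel
        rw [this]
        exact h.add (smul_one_psd hε.le)
      have h3 : 0 ≤ ((Yε - X) * T).trace.re := psd_trace_mul_re_nonneg hdiff hT
      have h4 : ((Yε - X) * T).trace = (Yε * T).trace - (X * T).trace := by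
        rw [Matrix.sub_mul, Matrix.trace_sub]
      rw [h4, Complex.sub_re] at h3
      linarith
    have hYεT : (Yε * T).trace = Sε.trace := by
      rw [← hSε2, hTdef, Matrix.mul_assoc, Matrix.mul_nonsing_inv _ hSεdet, Matrix.mul_one]
    rw [hYεT] at hmono
    have hSεtr : Sε.trace.re = ∑ i, Real.sqrt (hY.1.eigenvalues i + ε) :=
      trace_sqrt_shift hY ε hε.le hYε
    rw [hSεtr] at hmono
    linarith
  have hcont : Filter.Tendsto (fun ε : ℝ => ∑ i, Real.sqrt (hY.1.eigenvalues i + ε))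
      (nhdsWithin 0 (Set.Ioi 0)) (nhds (∑ i, Real.sqrt (hY.1.eigenvalues i + 0))) := by
    refine Filter.Tendsto.mono_left ?_ nhdsWithin_le_nhds
    exact Continuous.tendsto (by fun_prop) 0
  have hev : ∀ᶠ ε in nhdsWithin (0:ℝ) (Set.Ioi 0),
      (hX.sqrt).trace.re ≤ ∑ i, Real.sqrt (hY.1.eigenvalues i + ε) :=
    eventually_nhdsWithin_of_forall fun ε hε => key ε hε
  have := ge_of_tendsto hcont hev
  rw [trace_sqrt_eq hY]
  simpa using this

lemma tn_key {τ : Matrix n n ℂ} (hτ : τ.PosSemidef) {σ : Matrix n n ℂ} (hσ : σ.PosSemidef) :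
    (hτ.sqrt * hσ.sqrt)ᴴ * (hτ.sqrt * hσ.sqrt) = hσ.sqrt * τ * hσ.sqrt := by
  rw [conjTranspose_mul, hτ.posSemidef_sqrt.1.eq, hσ.posSemidef_sqrt.1.eq,
    Matrix.mul_assoc, ← Matrix.mul_assoc hτ.sqrt, hτ.sqrt_mul_self, ← Matrix.mul_assoc]

lemma conj_psd {τ : Matrix n n ℂ} (hτ : τ.PosSemidef) {σ : Matrix n n ℂ} (hσ : σ.PosSemidef) :
    (hσ.sqrt * τ * hσ.sqrt).PosSemidef := by
  have := hτ.conjTranspose_mul_mul_same (B := hσ.sqrt)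
  rwa [hσ.posSemidef_sqrt.1.eq] at this

lemma traceNorm_eq_sqrt_trace {A B : Matrix n n ℂ} (hB : B.PosSemidef) (hAB : Aᴴ * A = B) :
    traceNorm A = hB.sqrt.trace.re := by
  have h1 : msqrt (Aᴴ * A) = (posSemidef_conjTranspose_mul_self A).sqrt :=
    dif_pos (posSemidef_conjTranspose_mul_self A)
  rw [traceNorm, h1]
  exact congrArg _ (congrArg _ (sqrt_congr hAB _ hB))

end Aux

set_option maxHeartbeats 2000000 in
theorem stmt4 {n : Type*} [Fintype n] [DecidableEq n] (ρ σ ω : Matrix n n ℂ)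
    (hρ : ρ.PosSemidef) (hσ : σ.PosSemidef) (hω : ω.PosSemidef)
    (h : loewnerLE ρ ω) :
    traceNorm (msqrt ρ * msqrt σ) ≤ traceNorm (msqrt ω * msqrt σ) := by
  have e1 : msqrt ρ = hρ.sqrt := dif_pos hρ
  have e2 : msqrt σ = hσ.sqrt := dif_pos hσ
  have e3 : msqrt ω = hω.sqrt := dif_pos hω
  rw [traceNorm_eq_sqrt_trace (conj_psd hρ hσ) (by rw [e1, e2]; exact tn_key hρ hσ),
    traceNorm_eq_sqrt_trace (conj_psd hω hσ) (by rw [e3, e2]; exact tn_key hω hσ)]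
  refine trace_sqrt_mono (conj_psd hρ hσ) (conj_psd hω hσ) ?_
  have h2 := h.conjTranspose_mul_mul_same (B := hσ.sqrt)
  rw [hσ.posSemidef_sqrt.1.eq] at h2
  have heq : hσ.sqrt * (ω - ρ) * hσ.sqrt
      = hσ.sqrt * ω * hσ.sqrt - hσ.sqrt * ρ * hσ.sqrt := by noncomm_ring
  rwa [heq] at h2
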